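/- Let Q be an instance of the FIFO stack-up problem and let T = (t_1, …, t_m) be the pallet solution of some processing P of Q. Let P' be any processing of Q that follows the greedy rule: whenever the first bin of some remaining sequence is destined for an already open pallet, such a bin is removed; otherwise the next not yet opened pallet of T is opened by removing a front bin destined for it. Then P' also has pallet solution T, and the maximum number of simultaneously open pallets over all configurations of P' is at most the maximum number of simultaneously open pallets over all configurations of P; that is, no processing of Q with pallet solution T uses fewer stack-up places than the greedy processing. -/

import Mathlib

/-- The configuration of the remaining queues after the bins in `removed`
have been removed from the fronts of the queues of `Q`. -/
def confAfter {B : Type} [DecidableEq B] (Q : List (List B)) (removed : List B) :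
    List (List B) :=
  Q.map fun q => q.dropWhile fun b => decide (b ∈ removed)

/-- `ord` is the removal order of a processing of the instance `Q`:
it is a permutation of all bins, and at every step the removed bin is the
first bin of one of the remaining sequences. -/
def IsProcessing {B : Type} [DecidableEq B] (Q : List (List B)) (ord : List B) : Prop :=
  ord.Perm Q.flatten ∧
  ∀ i (hi : i < ord.length),
    ∃ q ∈ confAfter Q (ord.take i), q.head? = some ord[i]

/-- The set of pallets that are open after the bins in `removed` have been removed:
some bin of the pallet has been removed and some bin of the pallet remains. -/
def openAfter {B P : Type} [DecidableEq B] (Q : List (List B)) (plt : B → P)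
    (removed : List B) : Set P :=
  {t | (∃ b ∈ removed, plt b = t) ∧
       ∃ q ∈ confAfter Q removed, ∃ b ∈ q, plt b = t}

/-- The processing `ord` of `Q` uses at most `p` stack-up places: in every
configuration during the processing at most `p` pallets are open. -/
def UsesAtMost {B P : Type} [DecidableEq B] (Q : List (List B)) (plt : B → P)
    (ord : List B) (p : ℕ) : Prop :=
  ∀ i ≤ ord.length, (openAfter Q plt (ord.take i)).ncard ≤ p

/-- The set of pallet labels of the instance `Q`. -/
def pltsOf {B P : Type} (Q : List (List B)) (plt : B → P) : Set P :=
  {t | ∃ q ∈ Q, ∃ b ∈ q, plt b = t}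

/-- Every pallet of the instance has at least two bins in the sequences of `Q`. -/
def EveryPalletTwoBins {B P : Type} (Q : List (List B)) (plt : B → P) : Prop :=
  ∀ t ∈ pltsOf Q plt, ∃ b₁ b₂, b₁ ≠ b₂ ∧ b₁ ∈ Q.flatten ∧ b₂ ∈ Q.flatten ∧
    plt b₁ = t ∧ plt b₂ = t

/-- The arc relation of the sequence graph `G_Q`: there is an arc `(u,v)` iff
`u ≠ v` and in some sequence of `Q` a bin with label `u` occurs at an earlier
position than a bin with label `v`. -/
def seqArc {B P : Type} (Q : List (List B)) (plt : B → P) (u v : P) : Prop :=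
  u ≠ v ∧ ∃ q ∈ Q, ∃ i j : ℕ, i < j ∧
    (∃ b, q[i]? = some b ∧ plt b = u) ∧ (∃ b', q[j]? = some b' ∧ plt b' = v)

/-- `X` is a directed path-decomposition of the digraph with vertex set `Vs`
and arc relation `A`. -/
def IsDPD {V : Type} (A : V → V → Prop) (Vs : Set V) (X : List (Set V)) : Prop :=
  (∀ C ∈ X, C ⊆ Vs) ∧
  (∀ v ∈ Vs, ∃ i, ∃ hi : i < X.length, v ∈ X[i]) ∧
  (∀ u v, A u v → ∃ i j, i ≤ j ∧ ∃ hi : i < X.length, ∃ hj : j < X.length,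
      u ∈ X[i] ∧ v ∈ X[j]) ∧
  (∀ v i j l, i ≤ l → l ≤ j →
    ∀ hi : i < X.length, ∀ hj : j < X.length, ∀ hl : l < X.length,
      v ∈ X[i] → v ∈ X[j] → v ∈ X[l])


/-- Keep only the first occurrence of every element of a list (preserving the
order of first occurrences). Applied to the list of pallet labels of a removal
order this yields the pallet solution: the order in which pallets are opened. -/
def firstDedup {P : Type} [DecidableEq P] : List P → List P
  | [] => []
  | t :: ts => t :: firstDedup (ts.filter fun x => decide (x ≠ t))
termination_by l => l.length
decreasing_by
  simp
  exact (List.length_filter_le _ _).trans (by simp)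

set_option linter.unusedSectionVars false

section AuxFD
variable {P : Type} [DecidableEq P]

theorem firstDedup_nil : firstDedup ([] : List P) = [] := by rw [firstDedup.eq_1]

theorem firstDedup_cons (t : P) (ts : List P) :
    firstDedup (t :: ts) = t :: firstDedup (ts.filter fun x => decide (x ≠ t)) := by
  rw [firstDedup.eq_2]

theorem mem_firstDedup (a : P) (l : List P) : a ∈ firstDedup l ↔ a ∈ l := by
  match l with
  | [] => rw [firstDedup_nil]
  | t :: ts =>
    rw [firstDedup_cons, List.mem_cons, mem_firstDedup a (ts.filter fun x => decide (x ≠ t)),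
      List.mem_filter, List.mem_cons]
    by_cases h : a = t <;> simp [h]
termination_by l.length
decreasing_by simpa using Nat.lt_succ_of_le (List.length_filter_le _ ts)

theorem nodup_firstDedup (l : List P) : (firstDedup l).Nodup := by
  match l with
  | [] => rw [firstDedup_nil]; exact List.nodup_nil
  | t :: ts =>
    rw [firstDedup_cons]
    refine List.nodup_cons.mpr ⟨?_, nodup_firstDedup _⟩
    intro hmem
    have := (mem_firstDedup _ _).mp hmem
    simp [List.mem_filter] at this
termination_by l.length
decreasing_by simpa using Nat.lt_succ_of_le (List.length_filter_le _ ts)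

theorem firstDedup_append (u v : List P) :
    firstDedup (u ++ v)
      = firstDedup u ++ firstDedup (v.filter fun x => decide (x ∉ u)) := by
  match u with
  | [] => simp [firstDedup_nil]
  | t :: ts =>
    have ih := firstDedup_append (ts.filter fun x => decide (x ≠ t))
      (v.filter fun x => decide (x ≠ t))
    have hf : ((v.filter fun x => decide (x ≠ t)).filter
        fun x => decide (x ∉ ts.filter fun x => decide (x ≠ t)))
        = v.filter fun x => decide (x ∉ t :: ts) := by
      rw [List.filter_filter]
      apply List.filter_congr
      intro x _
      rw [← Bool.decide_and, decide_eq_decide]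
      simp only [List.mem_filter, List.mem_cons, not_or, decide_eq_true_eq]
      tauto
    rw [List.cons_append, firstDedup_cons, firstDedup_cons, List.filter_append, ih, hf,
      List.cons_append]
termination_by u.length
decreasing_by simpa using Nat.lt_succ_of_le (List.length_filter_le _ ts)

theorem firstDedup_take_prefix (l : List P) (n : ℕ) :
    firstDedup (l.take n) <+: firstDedup l := by
  conv_rhs => rw [← List.take_append_drop n l]
  rw [firstDedup_append]
  exact List.prefix_append _ _

theorem not_mem_take_self {l : List P} (h : l.Nodup) {m : ℕ} (hm : m < l.length) :
    l[m] ∉ l.take m := by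
  intro hmem
  obtain ⟨k, hk, he⟩ := List.mem_iff_getElem.mp hmem
  rw [List.getElem_take] at he
  have hkm : k < m := lt_of_lt_of_le hk (by rw [List.length_take]; exact min_le_left _ _)
  exact absurd (h.getElem_inj_iff.mp he) (by omega)

theorem not_mem_take_of_min {l : List P} {a : P} {s : ℕ}
    (hmin : ∀ k < s, l[k]? ≠ some a) : a ∉ l.take s := by
  intro hmem
  obtain ⟨k, hk, he⟩ := List.mem_iff_getElem.mp hmem
  rw [List.getElem_take] at he
  have hkl : k < l.length := lt_of_lt_of_le hk (by rw [List.length_take]; exact min_le_right _ _)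
  have hks : k < s := lt_of_lt_of_le hk (by rw [List.length_take]; exact min_le_left _ _)
  exact hmin k hks (by rw [List.getElem?_eq_getElem hkl]; exact congrArg some he)

theorem mem_take_exists {l : List P} {a : P} {n : ℕ} (h : a ∈ l.take n) :
    ∃ k < n, l[k]? = some a := by
  obtain ⟨k, hk, he⟩ := List.mem_iff_getElem.mp h
  rw [List.getElem_take] at he
  have hkl : k < l.length := lt_of_lt_of_le hk (by rw [List.length_take]; exact min_le_right _ _)
  have hks : k < n := lt_of_lt_of_le hk (by rw [List.length_take]; exact min_le_left _ _)
  exact ⟨k, hks, by rw [List.getElem?_eq_getElem hkl]; exact congrArg some he⟩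

theorem exists_first {l : List P} {a : P} (h : a ∈ l) :
    ∃ s, s < l.length ∧ l[s]? = some a ∧ ∀ k < s, l[k]? ≠ some a := by
  classical
  have hp : ∃ n : ℕ, l[n]? = some a := by
    obtain ⟨n, hn, rfl⟩ := List.mem_iff_getElem.mp h
    exact ⟨n, List.getElem?_eq_getElem hn⟩
  refine ⟨Nat.find hp, ?_, Nat.find_spec hp, fun k hk => Nat.find_min hp hk⟩
  by_contra hge
  have hsp := Nat.find_spec hp
  have hle : l.length ≤ Nat.find hp := by omega
  rw [List.getElem?_eq_none hle] at hsp
  exact absurd hsp (by simp)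

end AuxFD

section Proc
variable {B P : Type} [DecidableEq B] [DecidableEq P]

theorem eq_of_mem_mem {Q : List (List B)} (hnd : Q.flatten.Nodup)
    {q r : List B} (hq : q ∈ Q) (hr : r ∈ Q) {x : B} (hxq : x ∈ q) (hxr : x ∈ r) :
    q = r := by
  by_contra hne
  have hpw := (List.nodup_flatten.mp hnd).2
  haveI : Std.Symm (List.Disjoint (α := B)) := ⟨fun a b h => h.symm⟩
  exact (hpw.forall hq hr hne) hxq hxr

theorem proc_inv {Q : List (List B)} (hnd : Q.flatten.Nodup) {ord : List B}
    (hPr : IsProcessing Q ord) (i : ℕ) :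
    ∀ q ∈ Q, ∀ b ∈ q.dropWhile (fun b => decide (b ∈ ord.take i)), b ∉ ord.take i := by
  induction i with
  | zero => simp
  | succ i ih =>
    rcases Nat.lt_or_ge i ord.length with hi | hi
    · obtain ⟨qc, hqcm, hhead⟩ := hPr.2 i hi
      obtain ⟨r, hr, hqc⟩ := List.mem_map.mp hqcm
      intro q hq b hb
      have hts : ord.take (i+1) = ord.take i ++ [ord[i]] := by
        rw [List.take_succ, List.getElem?_eq_getElem hi]
        rfl
      have hA : q.dropWhile (fun b => decide (b ∈ ord.take (i+1)))
          = (q.dropWhile (fun b => decide (b ∈ ord.take i))).dropWhile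
              (fun b => decide (b ∈ ord.take (i+1))) := by
        conv_lhs => rw [← (List.takeWhile_append_dropWhile (p := (fun b => decide (b ∈ ord.take i))) (l := q))]
        rw [List.dropWhile_append, if_pos]
        rw [List.isEmpty_iff, List.dropWhile_eq_nil_iff]
        intro x hx
        have hx' := List.mem_takeWhile_imp hx
        simp only [decide_eq_true_eq] at hx' ⊢
        rw [hts]
        exact List.mem_append_left _ hx'
      rw [hA] at hb
      set q₂ := q.dropWhile (fun b => decide (b ∈ ord.take i)) with hq₂def
      have hq₂q : q₂.Sublist q := List.dropWhile_sublist _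
      have hndq₂ : q₂.Nodup := hnd.sublist (hq₂q.trans (List.sublist_flatten_of_mem hq))
      have hnotin : ∀ c ∈ q₂, c ∉ ord.take i := fun c hc => ih q hq c hc
      by_cases hm : ord[i] ∈ q₂
      · obtain ⟨ys, hys⟩ := List.head?_eq_some_iff.mp hhead
        have hoiq : ord[i] ∈ q := hq₂q.mem hm
        have hoir : ord[i] ∈ r := by
          have : ord[i] ∈ qc := by rw [hys]; exact List.mem_cons_self
          exact (List.dropWhile_sublist _).mem (hqc ▸ this)
        have hqr : q = r := eq_of_mem_mem hnd hq hr hoiq hoir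
        have hq₂qc : q₂ = qc := by rw [hq₂def, hqr, hqc]
        rw [hq₂qc, hys] at hb
        rw [List.dropWhile_cons, if_pos (by
          simp only [decide_eq_true_eq]
          rw [hts]
          exact List.mem_append_right _ (List.mem_singleton_self _))] at hb
        have hbys : b ∈ ys := (List.dropWhile_sublist _).mem hb
        have hbq₂ : b ∈ q₂ := by rw [hq₂qc, hys]; exact List.mem_cons_of_mem _ hbys
        have hbne : b ≠ ord[i] := by
          intro h
          have hnys : ord[i] ∉ ys := by
            have h2 := hndq₂
            rw [hq₂qc, hys, List.nodup_cons] at h2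
            exact h2.1
          exact hnys (h ▸ hbys)
        rw [hts]
        intro hmem
        rcases List.mem_append.mp hmem with h | h
        · exact hnotin b hbq₂ h
        · exact hbne (List.mem_singleton.mp h)
      · have hbq₂ : b ∈ q₂ := (List.dropWhile_sublist _).mem hb
        have hbne : b ≠ ord[i] := fun h => hm (h ▸ hbq₂)
        rw [hts]
        intro hmem
        rcases List.mem_append.mp hmem with h | h
        · exact hnotin b hbq₂ h
        · exact hbne (List.mem_singleton.mp h)
    · intro q hq b hb
      have e1 : ord.take i = ord := List.take_of_length_le hi
      have e2 : ord.take (i+1) = ord := List.take_of_length_le (by omega)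
      simp only [e2] at hb ⊢
      have := ih q hq b (by simp only [e1]; exact hb)
      simp only [e1] at this
      exact this

theorem remaining_iff {Q : List (List B)} (hnd : Q.flatten.Nodup) {ord : List B}
    (hPr : IsProcessing Q ord) (i : ℕ) (b : B) :
    (∃ q' ∈ confAfter Q (ord.take i), b ∈ q') ↔ b ∈ Q.flatten ∧ b ∉ ord.take i := by
  constructor
  · rintro ⟨q', hq'm, hbq'⟩
    obtain ⟨r, hr, hq'⟩ := List.mem_map.mp hq'm
    have hbr : b ∈ r := (List.dropWhile_sublist _).mem (hq' ▸ hbq')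
    exact ⟨List.mem_flatten.mpr ⟨r, hr, hbr⟩, proc_inv hnd hPr i r hr b (hq' ▸ hbq')⟩
  · rintro ⟨hbf, hbn⟩
    obtain ⟨q, hq, hbq⟩ := List.mem_flatten.mp hbf
    have hsplit := (List.takeWhile_append_dropWhile (p := (fun b => decide (b ∈ ord.take i))) (l := q))
    rcases List.mem_append.mp (by rw [hsplit]; exact hbq :
        b ∈ q.takeWhile (fun b => decide (b ∈ ord.take i)) ++
          q.dropWhile (fun b => decide (b ∈ ord.take i))) with h | h
    · exact absurd (by simpa using List.mem_takeWhile_imp h) hbn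
    · exact ⟨_, List.mem_map_of_mem hq, h⟩

theorem open_iff {Q : List (List B)} (plt : B → P) (hnd : Q.flatten.Nodup) {ord : List B}
    (hPr : IsProcessing Q ord) (i : ℕ) (t : P) :
    t ∈ openAfter Q plt (ord.take i) ↔
      (∃ b ∈ ord.take i, plt b = t) ∧
        ∃ b, b ∈ Q.flatten ∧ b ∉ ord.take i ∧ plt b = t := by
  constructor
  · rintro ⟨h1, q, hqm, b, hbq, hbt⟩
    have := (remaining_iff hnd hPr i b).mp ⟨q, hqm, hbq⟩
    exact ⟨h1, b, this.1, this.2, hbt⟩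
  · rintro ⟨h1, b, hbf, hbn, hbt⟩
    obtain ⟨q, hqm, hbq⟩ := (remaining_iff hnd hPr i b).mpr ⟨hbf, hbn⟩
    exact ⟨h1, q, hqm, b, hbq, hbt⟩

end Proc

open Classical in
/-- Let `T` be the pallet solution of some processing
`ordP` of `Q`, and let `ord'` be any processing of `Q` that follows the greedy
rule: whenever a front bin of some remaining sequence is destined for an
already open pallet, such a bin is removed; otherwise the next not yet opened
pallet of `T` is opened. Then `ord'` also has pallet solution `T`, and `ord'`
never has more open pallets than `ordP` does: no processing of `Q` with pallet
solution `T` uses fewer stack-up places than the greedy one. -/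
theorem greedy_palletSolution_optimal {B P : Type} [DecidableEq B] [DecidableEq P]
    (Q : List (List B)) (plt : B → P) (hnd : Q.flatten.Nodup)
    (ordP : List B) (hP : IsProcessing Q ordP)
    (T : List P) (hT : T = firstDedup (ordP.map plt))
    (ord' : List B) (hP' : IsProcessing Q ord')
    (hgreedy : ∀ i (hi : i < ord'.length),
      if ∃ q ∈ confAfter Q (ord'.take i), ∃ b, q.head? = some b ∧
           plt b ∈ openAfter Q plt (ord'.take i)
      then plt ord'[i] ∈ openAfter Q plt (ord'.take i)
      else (T.filter fun t => decide (t ∉ (ord'.take i).map plt)).head? =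
             some (plt ord'[i])) :
    firstDedup (ord'.map plt) = T ∧
    ∀ p : ℕ, UsesAtMost Q plt ordP p → UsesAtMost Q plt ord' p := by
  classical
  have hndT : T.Nodup := by rw [hT]; exact nodup_firstDedup _
  -- greedy one-step lemma
  have hstep : ∀ s (hs : s < ord'.length) (m : ℕ), m ≤ T.length →
      firstDedup ((ord'.take s).map plt) = T.take m →
      plt ord'[s] ∉ (ord'.take s).map plt →
      m < T.length ∧ T[m]? = some (plt ord'[s]) ∧
        firstDedup ((ord'.take (s+1)).map plt) = T.take (m+1) := by
    intro s hs m hm hfd hnm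
    have hg := hgreedy s hs
    have hhead : (T.filter fun t => decide (t ∉ (ord'.take s).map plt)).head?
        = some (plt ord'[s]) := by
      by_cases hc : ∃ q ∈ confAfter Q (ord'.take s), ∃ b, q.head? = some b ∧
          plt b ∈ openAfter Q plt (ord'.take s)
      · rw [if_pos hc] at hg
        obtain ⟨⟨b, hbm, hbe⟩, -⟩ := hg
        exact absurd (List.mem_map.mpr ⟨b, hbm, hbe⟩) hnm
      · rwa [if_neg hc] at hg
    have htk : ∀ x ∈ T.take m, x ∈ (ord'.take s).map plt := by
      intro x hx
      rw [← hfd] at hx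
      exact (mem_firstDedup _ _).mp hx
    have h0 : (T.take m).filter (fun t => decide (t ∉ (ord'.take s).map plt)) = [] :=
      List.filter_eq_nil_iff.mpr (fun x hx => by
        simp only [decide_eq_true_eq]
        exact not_not_intro (htk x hx))
    have hfil : T.filter (fun t => decide (t ∉ (ord'.take s).map plt))
        = (T.drop m).filter (fun t => decide (t ∉ (ord'.take s).map plt)) := by
      conv_lhs => rw [← List.take_append_drop m T]
      rw [List.filter_append, h0, List.nil_append]
    have hmlt : m < T.length := by
      by_contra hge
      rw [hfil, List.drop_eq_nil_of_le (by omega), List.filter_nil] at hhead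
      exact absurd hhead (by simp)
    have hdropc : T.drop m = T[m] :: T.drop (m+1) := List.drop_eq_getElem_cons hmlt
    have hTm : T[m] ∉ (ord'.take s).map plt := by
      intro hmem
      have h1 : T[m] ∈ T.take m := by
        rw [← hfd]
        exact (mem_firstDedup _ _).mpr hmem
      exact not_mem_take_self hndT hmlt h1
    have hfv : plt ord'[s] = T[m] := by
      rw [hfil, hdropc, List.filter_cons, if_pos (decide_eq_true hTm)] at hhead
      simp only [List.head?_cons] at hhead
      exact (Option.some.inj hhead).symm
    have hts : (ord'.take (s+1)).map plt = (ord'.take s).map plt ++ [plt ord'[s]] := by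
      rw [List.take_succ, List.getElem?_eq_getElem hs, List.map_append]
      rfl
    refine ⟨hmlt, by rw [List.getElem?_eq_getElem hmlt, hfv], ?_⟩
    rw [hts, firstDedup_append, hfd]
    have h1 : ([plt ord'[s]].filter fun x => decide (x ∉ (ord'.take s).map plt))
        = [plt ord'[s]] := by
      rw [List.filter_cons, if_pos (decide_eq_true hnm), List.filter_nil]
    rw [h1, firstDedup_cons, List.filter_nil, firstDedup_nil]
    rw [hfv, List.take_succ, List.getElem?_eq_getElem hmlt]
    rfl
  -- prefix claim for the greedy processing
  have hclaim : ∀ i : ℕ, ∃ m ≤ T.length, firstDedup ((ord'.take i).map plt) = T.take m := by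
    intro i
    induction i with
    | zero => exact ⟨0, Nat.zero_le _, by simp [firstDedup_nil]⟩
    | succ i ih =>
      obtain ⟨m, hm, hfd⟩ := ih
      rcases Nat.lt_or_ge i ord'.length with hi | hi
      · by_cases hmem : plt ord'[i] ∈ (ord'.take i).map plt
        · refine ⟨m, hm, ?_⟩
          have hts : (ord'.take (i+1)).map plt
              = (ord'.take i).map plt ++ [plt ord'[i]] := by
            rw [List.take_succ, List.getElem?_eq_getElem hi, List.map_append]
            rfl
          rw [hts, firstDedup_append, hfd]
          have h1 : ([plt ord'[i]].filter fun x => decide (x ∉ (ord'.take i).map plt))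
              = [] := by
            rw [List.filter_cons, if_neg, List.filter_nil]
            simp only [decide_eq_true_eq]
            exact not_not_intro hmem
          rw [h1, firstDedup_nil, List.append_nil]
        · obtain ⟨h1, _, h3⟩ := hstep i hi m hm hfd hmem
          exact ⟨m+1, h1, h3⟩
      · have e12 : ord'.take (i+1) = ord'.take i := by
          rw [List.take_of_length_le hi, List.take_of_length_le (by omega)]
        rw [e12]
        exact ⟨m, hm, hfd⟩
  -- part 1
  have hsetT : ∀ t, t ∈ T ↔ t ∈ ord'.map plt := by
    intro t
    rw [hT, mem_firstDedup]
    constructor <;> intro h <;> obtain ⟨b, hb, rfl⟩ := List.mem_map.mp h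
    · exact List.mem_map_of_mem (hP'.1.mem_iff.mpr (hP.1.mem_iff.mp hb))
    · exact List.mem_map_of_mem (hP.1.mem_iff.mpr (hP'.1.mem_iff.mp hb))
  obtain ⟨mf, hmf, hfdall⟩ := hclaim ord'.length
  rw [List.take_length] at hfdall
  have hmfeq : mf = T.length := by
    by_contra hne
    have hml : mf < T.length := lt_of_le_of_ne hmf hne
    have h1 : T[mf] ∈ T := List.getElem_mem hml
    have h2 : T[mf] ∈ firstDedup (ord'.map plt) :=
      (mem_firstDedup _ _).mpr ((hsetT _).mp h1)
    rw [hfdall] at h2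
    exact not_mem_take_self hndT hml h2
  have hpart1 : firstDedup (ord'.map plt) = T := by
    rw [hfdall, hmfeq, List.take_length]
  refine ⟨hpart1, ?_⟩
  -- part 2
  intro p hup i hi
  obtain ⟨j, hjle, hfdi⟩ := hclaim i
  by_cases hj0 : j = 0
  · subst hj0
    have hmapnil : (ord'.take i).map plt = [] := by
      cases h : (ord'.take i).map plt with
      | nil => rfl
      | cons a l =>
        rw [h, firstDedup_cons] at hfdi
        simp at hfdi
    have hti : ord'.take i = [] := List.map_eq_nil_iff.mp hmapnil
    rw [hti]
    have hoe : openAfter Q plt ([] : List B) = ∅ := by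
      ext t
      simp [openAfter]
    rw [hoe]
    simp
  · have hj1 : 1 ≤ j := Nat.one_le_iff_ne_zero.mpr hj0
    have hjT : j - 1 < T.length := by omega
    have hLmem : ∀ t, t ∈ (ord'.take i).map plt ↔ t ∈ T.take j := by
      intro t
      rw [← hfdi, mem_firstDedup]
    have htjtake : T[j-1] ∈ T.take j := by
      have hlt : j - 1 < (T.take j).length := by
        rw [List.length_take]; omega
      have : (T.take j)[j-1]'hlt = T[j-1] := List.getElem_take
      exact this ▸ List.getElem_mem hlt
    have htjL : T[j-1] ∈ (ord'.take i).map plt := (hLmem _).mpr htjtake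
    have htjmap : T[j-1] ∈ ord'.map plt := by
      rw [List.map_take] at htjL
      exact List.mem_of_mem_take htjL
    obtain ⟨s, hslen, hsval, hsmin⟩ := exists_first htjmap
    have hs' : s < ord'.length := by simpa using hslen
    have hplts : plt (ord'[s]'hs') = T[j-1] := by
      have h1 := hsval
      rw [List.getElem?_eq_getElem hslen] at h1
      have h2 := Option.some.inj h1
      rwa [List.getElem_map] at h2
    have hsi : s < i := by
      have h1 : T[j-1] ∈ (ord'.map plt).take i := by
        rw [← List.map_take]; exact htjL
      obtain ⟨k, hk, hkv⟩ := mem_take_exists h1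
      have : ¬ (k < s) := fun h => hsmin k h hkv
      omega
    have tjn : T[j-1] ∉ (ord'.take s).map plt := by
      rw [List.map_take]
      exact not_mem_take_of_min hsmin
    -- the prefix of T opened by ord' before step s is exactly T.take (j-1)
    obtain ⟨m₁, hm₁, hfds⟩ := hclaim s
    obtain ⟨hsd1, hsd2, -⟩ := hstep s hs' m₁ hm₁ hfds (by rw [hplts]; exact tjn)
    have hm₁eq : m₁ = j - 1 := by
      rw [List.getElem?_eq_getElem hsd1, hplts] at hsd2
      exact hndT.getElem_inj_iff.mp (Option.some.inj hsd2)
    -- first occurrence of T[j-1] in ordP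
    have htjT : T[j-1] ∈ T := List.getElem_mem hjT
    have htjM : T[j-1] ∈ ordP.map plt :=
      (mem_firstDedup _ _).mp (by rw [← hT]; exact htjT)
    obtain ⟨y, hylen, hyval, hymin⟩ := exists_first htjM
    have hyl : y < ordP.length := by simpa using hylen
    have hplty : plt (ordP[y]'hyl) = T[j-1] := by
      have h1 := hyval
      rw [List.getElem?_eq_getElem hylen] at h1
      have h2 := Option.some.inj h1
      rwa [List.getElem_map] at h2
    -- prefix property on the ordP side
    have hpre : ∀ n : ℕ, ∃ m' ≤ T.length,
        firstDedup ((ordP.map plt).take n) = T.take m' := by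
      intro n
      have h := firstDedup_take_prefix (ordP.map plt) n
      rw [← hT] at h
      obtain ⟨e⟩ := id h
      refine ⟨(firstDedup ((ordP.map plt).take n)).length, h.length_le, ?_⟩
      exact List.prefix_iff_eq_take.mp h
    obtain ⟨m₂, hm₂, hfdy⟩ := hpre y
    have htjny : T[j-1] ∉ (ordP.map plt).take y := not_mem_take_of_min hymin
    have hMy1 : (ordP.map plt).take (y+1)
        = (ordP.map plt).take y ++ [T[j-1]] := by
      rw [List.take_succ, hyval]
      rfl
    have hfdy1' : firstDedup ((ordP.map plt).take (y+1)) = T.take m₂ ++ [T[j-1]] := by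
      rw [hMy1, firstDedup_append, hfdy]
      have h1 : ([T[j-1]].filter fun x => decide (x ∉ (ordP.map plt).take y))
          = [T[j-1]] := by
        rw [List.filter_cons, if_pos (decide_eq_true htjny), List.filter_nil]
      rw [h1, firstDedup_cons, List.filter_nil, firstDedup_nil]
    obtain ⟨m₃, hm₃, hfdy1⟩ := hpre (y+1)
    have hlen3 : m₃ = m₂ + 1 := by
      have h1 := congrArg List.length (hfdy1.symm.trans hfdy1')
      rw [List.length_take, List.length_append, List.length_take] at h1
      simp at h1
      omega
    have hm₂lt : m₂ < T.length := by omega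
    have hTm₂ : T[m₂] = T[j-1] := by
      have h1 : T.take (m₂+1) = T.take m₂ ++ [T[j-1]] := by
        rw [← hlen3, ← hfdy1, hfdy1']
      rw [List.take_succ, List.getElem?_eq_getElem hm₂lt] at h1
      have h2 := List.append_cancel_left h1
      simpa using h2
    have hm₂eq : m₂ = j - 1 := hndT.getElem_inj_iff.mp hTm₂
    -- membership translations
    have hSmem : ∀ x, x ∈ (ord'.take s).map plt ↔ x ∈ T.take (j-1) := by
      intro x
      rw [← hm₁eq, ← hfds, mem_firstDedup]
    have hMymem : ∀ x, x ∈ (ordP.map plt).take y ↔ x ∈ T.take (j-1) := by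
      intro x
      rw [← hm₂eq, ← hfdy, mem_firstDedup]
    have hTj : T.take j = T.take (j-1) ++ [T[j-1]] := by
      have hj' : j = (j-1) + 1 := by omega
      conv_lhs => rw [hj']
      rw [List.take_succ, List.getElem?_eq_getElem hjT]
      rfl
    have hMy1mem : ∀ x, x ∈ (ordP.map plt).take (y+1) ↔ x ∈ T.take j := by
      intro x
      have e : firstDedup ((ordP.map plt).take (y+1)) = T.take j := by
        rw [hfdy1', hm₂eq, ← hTj]
      rw [← e, mem_firstDedup]
    -- the greedy condition is false at step s
    have hnotopen : T[j-1] ∉ openAfter Q plt (ord'.take s) := by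
      intro hopen
      obtain ⟨⟨b, hbm, hbe⟩, -⟩ := hopen
      exact tjn (List.mem_map.mpr ⟨b, hbm, hbe⟩)
    have Hneg : ¬ ∃ q ∈ confAfter Q (ord'.take s), ∃ b, q.head? = some b ∧
        plt b ∈ openAfter Q plt (ord'.take s) := by
      intro hc
      have hg := hgreedy s hs'
      rw [if_pos hc] at hg
      rw [hplts] at hg
      exact hnotopen hg
    -- Claim C : everything ordP removed before opening T[j-1] is removed by ord' before step s
    have hClaimC : ∀ b ∈ ordP.take y, b ∈ ord'.take s := by
      by_contra hcon
      push_neg at hcon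
      obtain ⟨b₀, hb₀R, hb₀S⟩ := hcon
      have hb₀f : b₀ ∈ Q.flatten := hP.1.mem_iff.mp (List.mem_of_mem_take hb₀R)
      obtain ⟨q, hq, hb₀q⟩ := List.mem_flatten.mp hb₀f
      have hb₀q₂ : b₀ ∈ q.dropWhile (fun b => decide (b ∈ ord'.take s)) := by
        have hsplit := (List.takeWhile_append_dropWhile (p := (fun b => decide (b ∈ ord'.take s))) (l := q))
        rcases List.mem_append.mp (by rw [hsplit]; exact hb₀q :
            b₀ ∈ q.takeWhile (fun b => decide (b ∈ ord'.take s)) ++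
              q.dropWhile (fun b => decide (b ∈ ord'.take s))) with h | h
        · exact absurd (by simpa using List.mem_takeWhile_imp h) hb₀S
        · exact h
      obtain ⟨hdd, rest, hq₂⟩ : ∃ hdd rest,
          q.dropWhile (fun b => decide (b ∈ ord'.take s)) = hdd :: rest := by
        cases hvv : q.dropWhile (fun b => decide (b ∈ ord'.take s)) with
        | nil => rw [hvv] at hb₀q₂; simp at hb₀q₂
        | cons a l => exact ⟨a, l, rfl⟩
      have hb₀u' : b₀ ∈ q.takeWhile (fun b => decide (b ∈ ordP.take y)) := by
        have hsplit := (List.takeWhile_append_dropWhile (p := (fun b => decide (b ∈ ordP.take y))) (l := q))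
        rcases List.mem_append.mp (by rw [hsplit]; exact hb₀q :
            b₀ ∈ q.takeWhile (fun b => decide (b ∈ ordP.take y)) ++
              q.dropWhile (fun b => decide (b ∈ ordP.take y))) with h | h
        · exact h
        · exact absurd hb₀R (proc_inv hnd hP y q hq b₀ h)
      have hlen : (q.takeWhile (fun b => decide (b ∈ ord'.take s))).length
          < (q.takeWhile (fun b => decide (b ∈ ordP.take y))).length := by
        by_contra hle
        push_neg at hle
        have hpre2 := List.prefix_of_prefix_length_le
          (List.takeWhile_prefix _) (List.takeWhile_prefix _) hle
        have hmem := hpre2.subset hb₀u'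
        exact hb₀S (by simpa using List.mem_takeWhile_imp hmem)
      have hhu' : hdd ∈ q.takeWhile (fun b => decide (b ∈ ordP.take y)) := by
        have h1 : (q.takeWhile (fun b => decide (b ∈ ord'.take s)) ++ [hdd]) <+: q := by
          refine ⟨rest, ?_⟩
          rw [List.append_assoc, List.singleton_append, ← hq₂]
          exact List.takeWhile_append_dropWhile
        have h2 := List.prefix_of_prefix_length_le h1
          (List.takeWhile_prefix (fun b => decide (b ∈ ordP.take y)))
          (by rw [List.length_append, List.length_singleton]; omega)
        exact h2.subset (List.mem_append_right _ (List.mem_singleton_self _))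
      have hhR : hdd ∈ ordP.take y := by simpa using List.mem_takeWhile_imp hhu'
      apply Hneg
      refine ⟨q.dropWhile (fun b => decide (b ∈ ord'.take s)),
        List.mem_map_of_mem hq, hdd, by rw [hq₂]; rfl, ?_⟩
      rw [open_iff plt hnd hP' s]
      constructor
      · have h1 : plt hdd ∈ (ordP.map plt).take y := by
          rw [← List.map_take]
          exact List.mem_map_of_mem hhR
        have h2 : plt hdd ∈ (ord'.take s).map plt :=
          (hSmem _).mpr ((hMymem _).mp h1)
        obtain ⟨b, hbm, hbe⟩ := List.mem_map.mp h2
        exact ⟨b, hbm, hbe⟩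
      · have hddq : hdd ∈ q := (List.dropWhile_sublist _).mem
          (by rw [hq₂]; exact List.mem_cons_self)
        refine ⟨hdd, List.mem_flatten.mpr ⟨q, hq, hddq⟩, ?_, rfl⟩
        exact proc_inv hnd hP' s q hq hdd (by rw [hq₂]; exact List.mem_cons_self)
    -- the open sets compare
    have hxle : y + 1 ≤ ordP.length := by omega
    have hsub : openAfter Q plt (ord'.take i) ⊆ openAfter Q plt (ordP.take (y+1)) := by
      intro t ht
      rw [open_iff plt hnd hP' i] at ht
      obtain ⟨⟨b, hbm, hbe⟩, c, hcf, hcn, hce⟩ := ht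
      rw [open_iff plt hnd hP (y+1)]
      constructor
      · have h1 : t ∈ (ord'.take i).map plt := List.mem_map.mpr ⟨b, hbm, hbe⟩
        have h2 : t ∈ (ordP.map plt).take (y+1) :=
          (hMy1mem _).mpr ((hLmem _).mp h1)
        rw [← List.map_take] at h2
        obtain ⟨b', hb'm, hb'e⟩ := List.mem_map.mp h2
        exact ⟨b', hb'm, hb'e⟩
      · by_cases hcb : c = ordP[y]'hyl
        · -- use d = ord'[s] as the remaining bin
          have hdmemi : ord'[s]'hs' ∈ ord'.take i := by
            have hl : s < (ord'.take i).length := by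
              rw [List.length_take]; omega
            have he : (ord'.take i)[s]'hl = ord'[s]'hs' := List.getElem_take
            exact he ▸ List.getElem_mem hl
          have hdf : ord'[s]'hs' ∈ Q.flatten :=
            hP'.1.mem_iff.mp (List.getElem_mem hs')
          have hdc : ord'[s]'hs' ≠ c := by
            intro h
            exact hcn (h ▸ hdmemi)
          have htv : t = T[j-1] := by rw [← hce, hcb, hplty]
          refine ⟨ord'[s]'hs', hdf, ?_, by rw [hplts, htv]⟩
          intro hmem
          rw [List.take_succ, List.getElem?_eq_getElem hyl] at hmem
          rcases List.mem_append.mp hmem with h | h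
          · have h1 : plt (ord'[s]'hs') ∈ (ordP.map plt).take y := by
              rw [← List.map_take]
              exact List.mem_map_of_mem h
            rw [hplts] at h1
            have h2 : T[j-1] ∈ T.take (j-1) := (hMymem _).mp h1
            exact not_mem_take_self hndT hjT h2
          · exact hdc ((by simpa using h : ord'[s]'hs' = ordP[y]'hyl).trans hcb.symm)
        · refine ⟨c, hcf, ?_, hce⟩
          intro hcR
          rw [List.take_succ, List.getElem?_eq_getElem hyl] at hcR
          rcases List.mem_append.mp hcR with h | h
          · have h1 : c ∈ ord'.take s := hClaimC c h
            have h2 : c ∈ ord'.take i := by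
              have h3 : (ord'.take i).take s = ord'.take s := by
                rw [List.take_take, min_eq_left (le_of_lt hsi)]
              rw [← h3] at h1
              exact List.mem_of_mem_take h1
            exact hcn h2
          · exact hcb (by simpa using h)
    have hfin : (openAfter Q plt (ordP.take (y+1))).Finite := by
      apply Set.Finite.subset (Set.Finite.image plt Q.flatten.finite_toSet)
      intro t ht
      rw [open_iff plt hnd hP (y+1)] at ht
      obtain ⟨-, c, hcf, -, hce⟩ := ht
      exact ⟨c, hcf, hce⟩
    calc (openAfter Q plt (ord'.take i)).ncard
        ≤ (openAfter Q plt (ordP.take (y+1))).ncard := Set.ncard_le_ncard hsub hfin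
      _ ≤ p := hup (y+1) hxle
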